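/- Let R be a commutative ring in which 2 is invertible, let a, b ∈ R be nilpotent, and let x ∈ R be a unit. Then x − a − b and x − a + b are units, only finitely many of the summands below are nonzero, and Σ_{j ≥ 0, k ≥ 1 odd} C(j+k, j) · a^j · b^k · (x⁻¹)^{j+k+1} = ( (x − a − b)⁻¹ − (x − a + b)⁻¹ )·2⁻¹. (This is the algebraic identity underlying the simplification of the boundary contribution of an indefinite fixed point component in the Witten integral, the relevant ring being the commutative ring of even-degree differential forms, with a = dΞ_{S_F}, b = dΞ̄_{S_F} nilpotent and x a nonzero real number.) -/

import Mathlib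

open Finset

private lemma geom_key {R : Type*} [CommRing R] {x : R} (hx : IsUnit x)
    (c : R) (M : ℕ) (hc : c ^ M = 0) :
    (x - c) * ∑ n ∈ range M, c ^ n * (Ring.inverse x) ^ (n + 1) = 1 := by
  set y := Ring.inverse x with hy
  have hxy : x * y = 1 := Ring.mul_inverse_cancel x hx
  have key : (x - c) * ∑ n ∈ range M, c ^ n * y ^ (n + 1)
      = ∑ n ∈ range M, (c ^ n * y ^ n - c ^ (n + 1) * y ^ (n + 1)) := by
    rw [Finset.mul_sum]
    refine Finset.sum_congr rfl fun n _ => ?_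
    calc (x - c) * (c ^ n * y ^ (n + 1))
        = c ^ n * y ^ n * (x * y) - c ^ (n + 1) * y ^ (n + 1) := by ring
      _ = c ^ n * y ^ n - c ^ (n + 1) * y ^ (n + 1) := by rw [hxy, mul_one]
  rw [key, Finset.sum_range_sub' (fun n => c ^ n * y ^ n), hc]
  simp

private lemma geom_inv {R : Type*} [CommRing R] {x : R} (hx : IsUnit x)
    (c : R) (M : ℕ) (hc : c ^ M = 0) :
    Ring.inverse (x - c) = ∑ n ∈ range M, c ^ n * (Ring.inverse x) ^ (n + 1) := by
  have key := geom_key hx c M hc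
  have hu : IsUnit (x - c) := IsUnit.of_mul_eq_one _ key
  have h1 : Ring.inverse (x - c) * (x - c) = 1 := Ring.inverse_mul_cancel _ hu
  calc Ring.inverse (x - c)
      = Ring.inverse (x - c) * ((x - c) * ∑ n ∈ range M, c ^ n * (Ring.inverse x) ^ (n + 1)) := by
        rw [key, mul_one]
    _ = (Ring.inverse (x - c) * (x - c)) * ∑ n ∈ range M, c ^ n * (Ring.inverse x) ^ (n + 1) := by
        ring
    _ = ∑ n ∈ range M, c ^ n * (Ring.inverse x) ^ (n + 1) := by rw [h1, one_mul]

private lemma add_pow_zero {R : Type*} [CommRing R] {a b : R} {M : ℕ}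
    (ha : a ^ M = 0) (hb : b ^ M = 0) : (a + b) ^ (M + M) = 0 := by
  rw [(Commute.all a b).add_pow]
  apply Finset.sum_eq_zero
  intro k hk
  rcases le_or_gt M k with h | h
  · rw [pow_eq_zero_of_le h ha, zero_mul, zero_mul]
  · have h2 : M ≤ M + M - k := by omega
    rw [pow_eq_zero_of_le h2 hb, mul_zero, zero_mul]

/-- in a commutative ring in which `2` is invertible, if `a`, `b` are
nilpotent and `x` is a unit, then `x − a − b` and `x − a + b` are units, only finitely
many of the terms `C(j+k,j)·a^j·b^k·(x⁻¹)^{j+k+1}` with `k` odd are nonzero, and their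
sum equals `((x − a − b)⁻¹ − (x − a + b)⁻¹)·2⁻¹`. -/
theorem binomial_odd_part_geometric_series_nilpotent
    {R : Type*} [CommRing R] (h2 : IsUnit (2 : R)) (a b x : R)
    (ha : IsNilpotent a) (hb : IsNilpotent b) (hx : IsUnit x) :
    IsUnit (x - a - b) ∧ IsUnit (x - a + b) ∧
    (Function.support (fun p : ℕ × ℕ =>
        if Odd p.2 then
          (((p.1 + p.2).choose p.1 : ℕ) : R) * a ^ p.1 * b ^ p.2 *
            (Ring.inverse x) ^ (p.1 + p.2 + 1)
        else 0)).Finite ∧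
    (∑ᶠ p : ℕ × ℕ,
        if Odd p.2 then
          (((p.1 + p.2).choose p.1 : ℕ) : R) * a ^ p.1 * b ^ p.2 *
            (Ring.inverse x) ^ (p.1 + p.2 + 1)
        else 0)
      = (Ring.inverse (x - a - b) - Ring.inverse (x - a + b)) * Ring.inverse (2 : R) := by
  obtain ⟨na, hna⟩ := ha
  obtain ⟨nb, hnb⟩ := hb
  set y := Ring.inverse x with hy
  set M : ℕ := na + nb with hM
  have haM : a ^ M = 0 := by rw [hM, pow_add, hna, zero_mul]
  have hbM : b ^ M = 0 := by rw [hM, pow_add, hnb, mul_zero]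
  have hnbM : (-b) ^ M = 0 := by rw [neg_pow, hbM, mul_zero]
  set N : ℕ := M + M with hN
  have habN : (a + b) ^ N = 0 := add_pow_zero haM hbM
  have hab'N : (a - b) ^ N = 0 := by
    rw [sub_eq_add_neg]; exact add_pow_zero haM hnbM
  -- the summand function
  set F : ℕ × ℕ → R := fun p =>
    if Odd p.2 then
      (((p.1 + p.2).choose p.1 : ℕ) : R) * a ^ p.1 * b ^ p.2 * y ^ (p.1 + p.2 + 1)
    else 0 with hF
  have hF0 : ∀ p : ℕ × ℕ, M ≤ p.1 ∨ M ≤ p.2 → F p = 0 := by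
    rintro ⟨j, k⟩ (h | h)
    · simp [hF, pow_eq_zero_of_le h haM]
    · simp [hF, pow_eq_zero_of_le h hbM]
  -- units
  have key1 := geom_key hx (a + b) N habN
  have key2 := geom_key hx (a - b) N hab'N
  have hs1 : x - a - b = x - (a + b) := by ring
  have hs2 : x - a + b = x - (a - b) := by ring
  have hu1 : IsUnit (x - a - b) := by
    rw [hs1]; exact IsUnit.of_mul_eq_one _ key1
  have hu2 : IsUnit (x - a + b) := by
    rw [hs2]; exact IsUnit.of_mul_eq_one _ key2
  -- support finiteness
  have hsupp : Function.support F ⊆ ↑(range M ×ˢ range M) := by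
    intro p hp
    simp only [Finset.coe_product, Set.mem_prod, Finset.mem_coe, Finset.mem_range]
    by_contra hc
    push_neg at hc
    rcases le_or_gt M p.1 with h | h
    · exact hp (hF0 p (Or.inl h))
    · exact hp (hF0 p (Or.inr (hc h)))
  have hfin : (Function.support F).Finite :=
    Set.Finite.subset (range M ×ˢ range M).finite_toSet hsupp
  refine ⟨hu1, hu2, hfin, ?_⟩
  -- replace finsum by a finite sum
  rw [finsum_eq_sum_of_support_subset F hsupp]
  -- auxiliary function: twice F
  set G : ℕ × ℕ → R := fun p =>
    if Odd p.2 then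
      2 * ((((p.1 + p.2).choose p.1 : ℕ) : R) * a ^ p.1 * b ^ p.2 * y ^ (p.1 + p.2 + 1))
    else 0 with hG
  have hGF : ∀ p, G p = 2 * F p := by
    rintro ⟨j, k⟩
    by_cases h : Odd k <;> simp [hG, hF, h]
  have hG0 : ∀ p : ℕ × ℕ, M ≤ p.1 ∨ M ≤ p.2 → G p = 0 := by
    intro p hp; rw [hGF, hF0 p hp, mul_zero]
  -- the difference of the two inverses
  have e1 : Ring.inverse (x - a - b) = ∑ n ∈ range N, (a + b) ^ n * y ^ (n + 1) := by
    rw [hs1]; exact geom_inv hx _ _ habN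
  have e2 : Ring.inverse (x - a + b) = ∑ n ∈ range N, (a - b) ^ n * y ^ (n + 1) := by
    rw [hs2]; exact geom_inv hx _ _ hab'N
  have hD : Ring.inverse (x - a - b) - Ring.inverse (x - a + b)
      = ∑ n ∈ range N, ∑ k ∈ range (n + 1), G (k, n - k) := by
    rw [e1, e2, ← Finset.sum_sub_distrib]
    refine Finset.sum_congr rfl fun n hn => ?_
    rw [(Commute.all a b).add_pow, sub_eq_add_neg a b, (Commute.all a (-b)).add_pow,
      Finset.sum_mul, Finset.sum_mul, ← Finset.sum_sub_distrib]
    refine Finset.sum_congr rfl fun k hk => ?_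
    have hkn : k ≤ n := Nat.lt_succ_iff.mp (Finset.mem_range.mp hk)
    have hnk : k + (n - k) = n := by omega
    by_cases hodd : Odd (n - k)
    · have hneg : (-b) ^ (n - k) = -(b ^ (n - k)) := hodd.neg_pow b
      simp only [hG, hodd, if_pos, hnk, hneg]
      ring
    · have hneg : (-b) ^ (n - k) = b ^ (n - k) := (Nat.not_odd_iff_even.mp hodd).neg_pow b
      simp only [hG, hodd, if_neg, hneg, not_false_iff]
      ring
  -- reindex the double sum
  have step1 : ∀ n ∈ range N, ∑ k ∈ range (n + 1), G (k, n - k)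
      = ∑ k ∈ range N, G (k, n - k) := by
    intro n hn
    refine Finset.sum_subset ?_ ?_
    · intro k hk
      exact Finset.mem_range.mpr (lt_of_lt_of_le (Finset.mem_range.mp hk)
        (Nat.succ_le_of_lt (Finset.mem_range.mp hn)))
    · intro k hk hk'
      have : n < k := by
        simp only [Finset.mem_range, Nat.lt_succ_iff, not_le] at hk'
        exact hk'
      have hz : n - k = 0 := by omega
      simp [hG, hz]
  have step2 : ∀ k ∈ range N, ∑ n ∈ range N, G (k, n - k)
      = ∑ m ∈ range N, G (k, m) := by
    intro k hk
    have hkN : k < N := Finset.mem_range.mp hk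
    have l1 : ∑ n ∈ range N, G (k, n - k) = ∑ n ∈ Finset.Ico k N, G (k, n - k) := by
      refine (Finset.sum_subset ?_ ?_).symm
      · intro n hn
        rw [Finset.mem_Ico] at hn
        exact Finset.mem_range.mpr hn.2
      · intro n hn hn'
        rw [Finset.mem_range] at hn
        rw [Finset.mem_Ico, not_and_or, not_le, not_lt] at hn'
        have : n < k := by omega
        have hz : n - k = 0 := by omega
        simp [hG, hz]
    have l2 : ∑ n ∈ Finset.Ico k N, G (k, n - k) = ∑ i ∈ range (N - k), G (k, (k + i) - k) := by
      rw [Finset.sum_Ico_eq_sum_range]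
    have l3 : ∑ i ∈ range (N - k), G (k, (k + i) - k) = ∑ i ∈ range (N - k), G (k, i) := by
      refine Finset.sum_congr rfl fun i _ => ?_
      rw [Nat.add_sub_cancel_left]
    have l4 : ∑ i ∈ range (N - k), G (k, i) = ∑ i ∈ range N, G (k, i) := by
      refine Finset.sum_subset ?_ ?_
      · intro i hi
        rw [Finset.mem_range] at hi ⊢
        omega
      · intro i hi hi'
        rw [Finset.mem_range] at hi
        rw [Finset.mem_range, not_lt] at hi'
        have : M ≤ k ∨ M ≤ i := by omega
        exact hG0 (k, i) this
    rw [l1, l2, l3, l4]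
  have hD2 : Ring.inverse (x - a - b) - Ring.inverse (x - a + b)
      = ∑ p ∈ range M ×ˢ range M, G p := by
    rw [hD, Finset.sum_congr rfl step1, Finset.sum_comm, Finset.sum_congr rfl step2,
      ← Finset.sum_product']
    refine (Finset.sum_subset ?_ ?_).symm
    · intro p hp
      simp only [Finset.mem_product, Finset.mem_range] at hp ⊢
      omega
    · intro p hp hp'
      rw [Finset.mem_product, Finset.mem_range, Finset.mem_range] at hp'
      rw [not_and_or, not_lt, not_lt] at hp'
      rcases hp' with h | h
      · exact hG0 p (Or.inl (le_trans (by omega) h))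
      · exact hG0 p (Or.inr (le_trans (by omega) h))
  -- conclude
  have h2inv : (2 : R) * Ring.inverse (2 : R) = 1 := Ring.mul_inverse_cancel _ h2
  have main : (∑ p ∈ range M ×ˢ range M, F p) * 2
      = Ring.inverse (x - a - b) - Ring.inverse (x - a + b) := by
    rw [hD2, Finset.sum_mul]
    refine Finset.sum_congr rfl fun p _ => ?_
    rw [hGF]; ring
  calc ∑ p ∈ range M ×ˢ range M, F p
      = (∑ p ∈ range M ×ˢ range M, F p) * (2 * Ring.inverse 2) := by rw [h2inv, mul_one]
    _ = ((∑ p ∈ range M ×ˢ range M, F p) * 2) * Ring.inverse 2 := by ring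
    _ = (Ring.inverse (x - a - b) - Ring.inverse (x - a + b)) * Ring.inverse 2 := by rw [main]
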